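/- Let E be a real inner product space and let g, h : E → ℝ be differentiable functions, and let L > 0. Then the following are equivalent: (i) both L·h − g and L·h + g are convex on E; (ii) for all x, y ∈ E, |g(x) − g(y) − ⟨∇g(y), x − y⟩| ≤ L·D_h(x, y), where D_h(x, y) := h(x) − h(y) − ⟨∇h(y), x − y⟩. (Extended Descent Lemma, full-domain case.) -/

import Mathlib

open RealInnerProductSpace

lemma convexOn_univ_iff_fderiv {E : Type*} [NormedAddCommGroup E] [NormedSpace ℝ E]
    (f : E → ℝ) (f' : E → E →L[ℝ] ℝ) (hf : ∀ x, HasFDerivAt f (f' x) x) :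
    ConvexOn ℝ Set.univ f ↔ ∀ x y : E, f' y (x - y) ≤ f x - f y := by
  constructor
  · intro hc x y
    set φ : ℝ → ℝ := fun t => f (AffineMap.lineMap y x t) with hφ
    have hφc : ConvexOn ℝ Set.univ φ := by
      have := hc.comp_affineMap (AffineMap.lineMap y x : ℝ →ᵃ[ℝ] E)
      simpa [Set.preimage_univ, Function.comp_def] using this
    have hd : HasDerivAt φ (f' y (x - y)) 0 := by
      have hc' : HasDerivAt (fun t : ℝ => AffineMap.lineMap y x t) (x - y) 0 := by
        have h0 : HasDerivAt (fun t : ℝ => y + t • (x - y)) (x - y) 0 := by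
          simpa using ((hasDerivAt_id (0:ℝ)).smul_const (x - y)).const_add y
        have heq : (fun t : ℝ => y + t • (x - y))
            = fun t : ℝ => AffineMap.lineMap y x t := by
          funext t; simp [AffineMap.lineMap_apply_module]; module
        rwa [heq] at h0
      have := (hf (AffineMap.lineMap y x (0:ℝ))).comp_hasDerivAt 0 hc'
      simpa [AffineMap.lineMap_apply_module, Function.comp_def, φ] using this
    have := hφc.le_slope_of_hasDerivAt (Set.mem_univ 0) (Set.mem_univ 1) one_pos hd
    simpa [slope_def_field, φ, AffineMap.lineMap_apply_module] using this
  · intro H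
    refine ⟨convex_univ, fun x _ y _ a b ha hb hab => ?_⟩
    set z := a • x + b • y with hz
    have h1 : f' z (x - z) ≤ f x - f z := H x z
    have h2 : f' z (y - z) ≤ f y - f z := H y z
    have hsum : a • (x - z) + b • (y - z) = 0 := by
      have h' : a • (x - z) + b • (y - z) = (a • x + b • y) - (a + b) • z := by module
      rw [h', hab, one_smul, hz, sub_self]
    have hzero : a * f' z (x - z) + b * f' z (y - z) = 0 := by
      have := congrArg (f' z) hsum
      simpa [map_add, map_smul, smul_eq_mul] using this
    simp only [smul_eq_mul]
    have h3 : (a + b) * f z = f z := by rw [hab, one_mul]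
    nlinarith [mul_le_mul_of_nonneg_left h1 ha, mul_le_mul_of_nonneg_left h2 hb]

/-- Extended Descent Lemma (full-domain case): for differentiable `g h : E → ℝ` with
gradients `g' h' : E → E` (expressed via `HasFDerivAt` and `innerSL`), and `L > 0`,
the pair `(g, h)` is `L`-smooth adaptable on `E` (i.e. `L•h - g` and `L•h + g` are
convex on `E`) if and only if
`|g x - g y - ⟪∇g y, x - y⟫| ≤ L * D_h(x, y)` for all `x, y ∈ E`, where
`D_h(x, y) = h x - h y - ⟪∇h y, x - y⟫` is the Bregman distance. -/
theorem extended_descent_lemma {E : Type*} [NormedAddCommGroup E] [InnerProductSpace ℝ E]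
    (g h : E → ℝ) (g' h' : E → E)
    (hg : ∀ x, HasFDerivAt g (innerSL ℝ (g' x)) x)
    (hh : ∀ x, HasFDerivAt h (innerSL ℝ (h' x)) x)
    (L : ℝ) (hL : 0 < L) :
    (ConvexOn ℝ Set.univ (fun x => L * h x - g x) ∧
      ConvexOn ℝ Set.univ (fun x => L * h x + g x)) ↔
    (∀ x y : E, |g x - g y - ⟪g' y, x - y⟫| ≤
      L * (h x - h y - ⟪h' y, x - y⟫)) := by
  have hf1 : ∀ x, HasFDerivAt (fun x => L * h x - g x)
      (L • innerSL ℝ (h' x) - innerSL ℝ (g' x)) x :=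
    fun x => ((hh x).const_mul L).sub (hg x)
  have hf2 : ∀ x, HasFDerivAt (fun x => L * h x + g x)
      (L • innerSL ℝ (h' x) + innerSL ℝ (g' x)) x :=
    fun x => ((hh x).const_mul L).add (hg x)
  rw [convexOn_univ_iff_fderiv _ _ hf1, convexOn_univ_iff_fderiv _ _ hf2]
  constructor
  · rintro ⟨H1, H2⟩ x y
    have h1 := H1 x y
    have h2 := H2 x y
    simp only [ContinuousLinearMap.sub_apply, ContinuousLinearMap.add_apply,
      ContinuousLinearMap.smul_apply, innerSL_apply_apply, smul_eq_mul] at h1 h2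
    rw [abs_le]
    constructor <;> nlinarith
  · intro H
    constructor <;> intro x y <;>
    · have := abs_le.mp (H x y)
      simp only [ContinuousLinearMap.sub_apply, ContinuousLinearMap.add_apply,
        ContinuousLinearMap.smul_apply, innerSL_apply_apply, smul_eq_mul]
      nlinarith [this.1, this.2]
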